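/- Mixed exponential-trigonometric identities: for x, y ∈ ℂ and nonzero u, v ∈ ℂ, assuming the series defining exp_{s,t}(x,u), exp_{s,t}(iy,v) and exp_{s,t}(y,−v) converge absolutely: (1) Σ_{n=0}^{∞} (x ⊕_{u,v} iy)^{(n)}/{n}_{s,t}! = exp_{s,t}(x,u)·(cos_{s,t}(y,v) + i·sin_{s,t}(y,v)); (2) Σ_{n=0}^{∞} (x ⊕_{u,−v} y)^{(n)}/{n}_{s,t}! = exp_{s,t}(x,u)·(cos_{s,t}(y,v) + sin_{s,t}(y,v)). -/

import Mathlib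

open scoped BigOperators

noncomputable section

/-- The Lucas sequence `{n}_{s,t}`. -/
def lucasSeq (s t : ℂ) : ℕ → ℂ
  | 0 => 0
  | 1 => 1
  | n + 2 => s * lucasSeq s t (n + 1) + t * lucasSeq s t n

/-- The Lucastorial `{n}_{s,t}!`. -/
def lucasFact (s t : ℂ) : ℕ → ℂ
  | 0 => 1
  | n + 1 => lucasFact s t n * lucasSeq s t (n + 1)

/-- The Lucasnomial coefficient `{n choose k}_{s,t}`. -/
def lucasBinom (s t : ℂ) (n k : ℕ) : ℂ :=
  lucasFact s t n / (lucasFact s t k * lucasFact s t (n - k))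

/-- The `(u,v)`-deformed Lucasnomial power `(x ⊕_{u,v} y)^{(n)}`. -/
def lucasPow (s t u v x y : ℂ) (n : ℕ) : ℂ :=
  ∑ k ∈ Finset.range (n + 1),
    lucasBinom s t n k * u ^ ((n - k).choose 2) * v ^ (k.choose 2) * x ^ (n - k) * y ^ k

/-- The Lucas-derivative with respect to the roots `p = φ`, `q = φ'`. -/
def lucasDeriv (p q : ℂ) (f : ℂ → ℂ) (x : ℂ) : ℂ :=
  (f (p * x) - f (q * x)) / ((p - q) * x)

/-- The Lucas-derivative, extended by `0` at `0`, as an operator suitable for iteration. -/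
def lucasDeriv0 (p q : ℂ) (f : ℂ → ℂ) : ℂ → ℂ :=
  fun x => if x = 0 then 0 else (f (p * x) - f (q * x)) / ((p - q) * x)

/-- The Lucas-Pantograph exponential `exp_{s,t}(z,u)`. -/
def lucasExp (s t u z : ℂ) : ℂ :=
  ∑' n : ℕ, u ^ (n.choose 2) * z ^ n / lucasFact s t n

/-- The Lucas-Pantograph sine `sin_{s,t}(z,u)`. -/
def lucasSin (s t u z : ℂ) : ℂ :=
  ∑' n : ℕ, (-1 : ℂ) ^ n * u ^ ((2 * n + 1).choose 2) * z ^ (2 * n + 1) / lucasFact s t (2 * n + 1)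

/-- The Lucas-Pantograph cosine `cos_{s,t}(z,u)`. -/
def lucasCos (s t u z : ℂ) : ℂ :=
  ∑' n : ℕ, (-1 : ℂ) ^ n * u ^ ((2 * n).choose 2) * z ^ (2 * n) / lucasFact s t (2 * n)


section Aux

lemma lucasFact_ne_zero (s t : ℂ) (hL : ∀ n : ℕ, 1 ≤ n → lucasSeq s t n ≠ 0) :
    ∀ n, lucasFact s t n ≠ 0 := by
  intro n
  induction n with
  | zero => simp [lucasFact]
  | succ k ih =>
    rw [lucasFact]
    exact mul_ne_zero ih (hL (k + 1) (by omega))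

lemma choose_two_even (k : ℕ) : (2 * k).choose 2 = 2 * (k * (k - 1)) + k := by
  cases k with
  | zero => simp
  | succ m =>
    rw [Nat.choose_two_right]
    have h0 : 2 * (m + 1) - 1 = 2 * m + 1 := by omega
    have h2 : 2 * (m + 1) * (2 * m + 1) = 2 * ((m + 1) * (2 * m + 1)) := by ring
    rw [h0, h2, Nat.mul_div_cancel_left _ (by norm_num : 0 < 2)]
    have h3 : m + 1 - 1 = m := rfl
    rw [h3]; ring

lemma choose_two_odd (k : ℕ) : (2 * k + 1).choose 2 = 2 * (k * k) + k := by
  rw [Nat.choose_two_right]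
  have h0 : 2 * k + 1 - 1 = 2 * k := rfl
  have h2 : (2 * k + 1) * (2 * k) = 2 * ((k * k) * 2 + k) := by ring
  rw [h0, h2, Nat.mul_div_cancel_left _ (by norm_num : 0 < 2)]
  omega

lemma neg_one_pow_choose_even (k : ℕ) : (-1 : ℂ) ^ ((2 * k).choose 2) = (-1) ^ k := by
  rw [choose_two_even, pow_add, pow_mul, neg_one_sq, one_pow, one_mul]

lemma neg_one_pow_choose_odd (k : ℕ) : (-1 : ℂ) ^ ((2 * k + 1).choose 2) = (-1) ^ k := by
  rw [choose_two_odd, pow_add, pow_mul, neg_one_sq, one_pow, one_mul]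

/-- Cauchy product lemma. -/
lemma lucas_cauchy (s t : ℂ) (hL : ∀ n : ℕ, 1 ≤ n → lucasSeq s t n ≠ 0) (u w x z : ℂ)
    (hx : Summable fun n : ℕ => ‖u ^ (n.choose 2) * x ^ n / lucasFact s t n‖)
    (hz : Summable fun n : ℕ => ‖w ^ (n.choose 2) * z ^ n / lucasFact s t n‖) :
    HasSum (fun n : ℕ => lucasPow s t u w x z n / lucasFact s t n)
      (lucasExp s t u x * lucasExp s t w z) := by
  set f : ℕ → ℂ := fun n => u ^ (n.choose 2) * x ^ n / lucasFact s t n with hf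
  set g : ℕ → ℂ := fun n => w ^ (n.choose 2) * z ^ n / lucasFact s t n with hg
  have hfz := lucasFact_ne_zero s t hL
  have hkey : ∀ n : ℕ, lucasPow s t u w x z n / lucasFact s t n
      = ∑ k ∈ Finset.range (n + 1), g k * f (n - k) := by
    intro n
    rw [lucasPow, Finset.sum_div]
    refine Finset.sum_congr rfl fun k hk => ?_
    simp only [hf, hg, lucasBinom]
    field_simp [hfz n, hfz k, hfz (n - k)]
  have hsum : Summable fun n : ℕ => ∑ k ∈ Finset.range (n + 1), g k * f (n - k) :=
    (summable_norm_sum_mul_range_of_summable_norm hz hx).of_norm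
  have h := hsum.hasSum
  rw [← tsum_mul_tsum_eq_tsum_sum_range_of_summable_norm hz hx] at h
  have : (∑' n, g n) * ∑' n, f n = lucasExp s t u x * lucasExp s t w z := by
    rw [mul_comm]; rfl
  rw [this] at h
  exact h.congr_fun fun n => hkey n

end Aux

/-- Mixed exponential-trigonometric identities. -/
theorem lucasExp_mixed_trig (s t : ℂ) (hs : s ≠ 0) (ht : t ≠ 0)
    (hL : ∀ n : ℕ, 1 ≤ n → lucasSeq s t n ≠ 0)
    (x y u v : ℂ) (hu : u ≠ 0) (hv : v ≠ 0)
    (hconvx : Summable fun n : ℕ => ‖u ^ (n.choose 2) * x ^ n / lucasFact s t n‖)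
    (hconviy : Summable fun n : ℕ =>
      ‖v ^ (n.choose 2) * (Complex.I * y) ^ n / lucasFact s t n‖)
    (hconvny : Summable fun n : ℕ =>
      ‖(-v) ^ (n.choose 2) * y ^ n / lucasFact s t n‖) :
    HasSum (fun n : ℕ => lucasPow s t u v x (Complex.I * y) n / lucasFact s t n)
      (lucasExp s t u x * (lucasCos s t v y + Complex.I * lucasSin s t v y)) ∧
    HasSum (fun n : ℕ => lucasPow s t u (-v) x y n / lucasFact s t n)
      (lucasExp s t u x * (lucasCos s t v y + lucasSin s t v y)) := by

  have hfz := lucasFact_ne_zero s t hL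
  have exp1 : lucasExp s t v (Complex.I * y)
      = lucasCos s t v y + Complex.I * lucasSin s t v y := by
    set f : ℕ → ℂ := fun n => v ^ (n.choose 2) * (Complex.I * y) ^ n / lucasFact s t n with hf
    have hsf : Summable f := hconviy.of_norm
    have he : Summable fun k : ℕ => f (2 * k) :=
      hsf.comp_injective (fun a b h => by omega)
    have ho : Summable fun k : ℕ => f (2 * k + 1) :=
      hsf.comp_injective (fun a b h => by omega)
    have hsplit := tsum_even_add_odd he ho
    have hcos : (∑' k : ℕ, f (2 * k)) = lucasCos s t v y := by
      refine tsum_congr fun k => ?_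
      simp only [hf, lucasCos, mul_pow, pow_mul, Complex.I_sq]
      ring
    have hsin : (∑' k : ℕ, f (2 * k + 1)) = Complex.I * lucasSin s t v y := by
      rw [lucasSin, ← tsum_mul_left]
      refine tsum_congr fun k => ?_
      have hI : Complex.I ^ (2 * k + 1) = (-1) ^ k * Complex.I := by
        rw [pow_succ, pow_mul, Complex.I_sq]
      simp only [hf, mul_pow, hI]
      ring
    rw [lucasExp, ← hsplit, hcos, hsin]
  have exp2 : lucasExp s t (-v) y = lucasCos s t v y + lucasSin s t v y := by
    set f : ℕ → ℂ := fun n => (-v) ^ (n.choose 2) * y ^ n / lucasFact s t n with hf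
    have hsf : Summable f := hconvny.of_norm
    have he : Summable fun k : ℕ => f (2 * k) :=
      hsf.comp_injective (fun a b h => by omega)
    have ho : Summable fun k : ℕ => f (2 * k + 1) :=
      hsf.comp_injective (fun a b h => by omega)
    have hsplit := tsum_even_add_odd he ho
    have hcos : (∑' k : ℕ, f (2 * k)) = lucasCos s t v y := by
      refine tsum_congr fun k => ?_
      simp only [hf, lucasCos, neg_pow v, neg_one_pow_choose_even]
    have hsin : (∑' k : ℕ, f (2 * k + 1)) = lucasSin s t v y := by
      refine tsum_congr fun k => ?_
      simp only [hf, lucasSin, neg_pow v, neg_one_pow_choose_odd]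
    rw [lucasExp, ← hsplit, hcos, hsin]
  constructor
  · have h := lucas_cauchy s t hL u v x (Complex.I * y) hconvx hconviy
    rwa [exp1] at h
  · have h := lucas_cauchy s t hL u (-v) x y hconvx hconvny
    rwa [exp2] at h
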